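/- Let X and Y be discrete random variables taking values in finite sets 𝒳 and 𝒴, with joint distribution P_{X,Y}. Then the chi-squared mutual information I_{χ²}(X;Y) := χ²(P_{X,Y} || P_X ⊗ P_Y) satisfies I_{χ²}(X;Y) ≤ |𝒳| − 1. -/

import Mathlib

open Finset

/-- For a joint distribution `p` of discrete random variables on finite
sets `X` and `Y`, the chi-squared mutual information
`I_{χ²}(X;Y) = χ²(P_{X,Y} ‖ P_X ⊗ P_Y)` is at most `|X| - 1`. -/
theorem chiSq_mutual_info_le_card_sub_one {X Y : Type*} [Fintype X] [Fintype Y]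
    (p : X × Y → ℝ) (h0 : ∀ z, 0 ≤ p z) (h1 : ∑ z, p z = 1) :
    ∑ x, ∑ y,
        ((∑ y', p (x, y')) * (∑ x', p (x', y))) *
          (p (x, y) / ((∑ y', p (x, y')) * (∑ x', p (x', y))) - 1) ^ 2
      ≤ (Fintype.card X : ℝ) - 1 := by
  set a : X → ℝ := fun x => ∑ y', p (x, y') with ha
  set b : Y → ℝ := fun y => ∑ x', p (x', y) with hb
  have ha0 : ∀ x, 0 ≤ a x := fun x => Finset.sum_nonneg fun y _ => h0 _
  have hb0 : ∀ y, 0 ≤ b y := fun y => Finset.sum_nonneg fun x _ => h0 _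
  have hpa : ∀ x y, p (x, y) ≤ a x := fun x y =>
    Finset.single_le_sum (fun y' _ => h0 (x, y')) (Finset.mem_univ y)
  have hpb : ∀ x y, p (x, y) ≤ b y := fun x y =>
    Finset.single_le_sum (fun x' _ => h0 (x', y)) (Finset.mem_univ x)
  have hsa : ∑ x, a x = 1 := by rw [← h1, Fintype.sum_prod_type]
  have hsb : ∑ y, b y = 1 := by
    rw [← h1, Fintype.sum_prod_type]
    rw [Finset.sum_comm]
  have key : ∀ x y, (a x * b y) * (p (x, y) / (a x * b y) - 1) ^ 2
      = p (x, y) ^ 2 / (a x * b y) - 2 * p (x, y) + a x * b y := by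
    intro x y
    rcases eq_or_lt_of_le (mul_nonneg (ha0 x) (hb0 y)) with hq | hq
    · have hp0 : p (x, y) = 0 := by
        rcases mul_eq_zero.mp hq.symm with h | h
        · exact le_antisymm (h ▸ hpa x y) (h0 _)
        · exact le_antisymm (h ▸ hpb x y) (h0 _)
      rw [← hq, hp0]
      simp
    · have hA : a x ≠ 0 := left_ne_zero_of_mul hq.ne'
      have hB : b y ≠ 0 := right_ne_zero_of_mul hq.ne'
      field_simp
      ring
  have hab : ∑ x, ∑ y, a x * b y = 1 := by
    rw [← Finset.sum_mul_sum, hsa, hsb, one_mul]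
  have hstep : ∀ x y, p (x, y) ^ 2 / (a x * b y) ≤ p (x, y) / a x := by
    intro x y
    rcases eq_or_lt_of_le (ha0 x) with hA | hA
    · have hp0 : p (x, y) = 0 := le_antisymm (hA ▸ hpa x y) (h0 _)
      simp [hp0]
    rcases eq_or_lt_of_le (hb0 y) with hB | hB
    · have hp0 : p (x, y) = 0 := le_antisymm (hB ▸ hpb x y) (h0 _)
      simp [hp0]
    have h2 : p (x, y) ^ 2 ≤ p (x, y) * b y := by
      rw [sq]
      exact mul_le_mul_of_nonneg_left (hpb x y) (h0 _)
    calc p (x, y) ^ 2 / (a x * b y)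
        ≤ (p (x, y) * b y) / (a x * b y) :=
          div_le_div₀ (mul_nonneg (h0 _) (hb0 y)) h2 (mul_pos hA hB) le_rfl
      _ = p (x, y) / a x := by
          rw [mul_div_mul_right _ _ hB.ne']
  have hxle : ∀ x, ∑ y, p (x, y) ^ 2 / (a x * b y) ≤ 1 := by
    intro x
    calc ∑ y, p (x, y) ^ 2 / (a x * b y) ≤ ∑ y, p (x, y) / a x :=
          Finset.sum_le_sum fun y _ => hstep x y
      _ = a x / a x := by rw [← Finset.sum_div]
      _ ≤ 1 := by
          rcases eq_or_lt_of_le (ha0 x) with hA | hA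
          · simp [← hA]
          · rw [div_self hA.ne']
  calc ∑ x, ∑ y, (a x * b y) * (p (x, y) / (a x * b y) - 1) ^ 2
      = ∑ x, ∑ y, (p (x, y) ^ 2 / (a x * b y) - 2 * p (x, y) + a x * b y) :=
        Finset.sum_congr rfl fun x _ => Finset.sum_congr rfl fun y _ => key x y
    _ = (∑ x, ∑ y, p (x, y) ^ 2 / (a x * b y)) - 2 * (∑ x, ∑ y, p (x, y))
        + ∑ x, ∑ y, a x * b y := by
        simp [Finset.sum_add_distrib, Finset.sum_sub_distrib, Finset.mul_sum]
    _ = (∑ x, ∑ y, p (x, y) ^ 2 / (a x * b y)) - 2 * 1 + 1 := by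
        rw [← Fintype.sum_prod_type, h1, hab]
    _ ≤ (Fintype.card X : ℝ) - 2 * 1 + 1 := by
        have : ∑ x, ∑ y, p (x, y) ^ 2 / (a x * b y) ≤ (Fintype.card X : ℝ) := by
          calc ∑ x, ∑ y, p (x, y) ^ 2 / (a x * b y) ≤ ∑ _x : X, (1 : ℝ) :=
                Finset.sum_le_sum fun x _ => hxle x
            _ = (Fintype.card X : ℝ) := by simp
        linarith
    _ = (Fintype.card X : ℝ) - 1 := by ring
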